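/- (Validity of ⊗-elimination) For all finite multisets Γ, Δ of IMLL formulas and all IMLL formulas φ, ψ, χ: if Γ ⊩ φ ⊗ ψ and Δ ⨾ φ ⨾ ψ ⊩ χ, then Γ ⨾ Δ ⊩ χ. -/

import Mathlib

/-- Formulas of intuitionistic multiplicative linear logic over a
countably infinite set of atoms (here: `ℕ`). -/
inductive MForm : Type where
  | atom : ℕ → MForm
  | tensor : MForm → MForm → MForm
  | unit : MForm
  | limp : MForm → MForm → MForm
deriving DecidableEq

/-- An atomic rule `(P₁ ▷ p₁, …, Pₙ ▷ pₙ) ⇒ p`: a (possibly empty) finite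
set of atomic sequents together with a conclusion atom. -/
structure MRule : Type where
  prems : Finset (Multiset ℕ × ℕ)
  concl : ℕ

/-- A base is a set of atomic rules. -/
abbrev MBase := Set MRule

/-- Derivability in a base `B`: `P ⊢_B p`. -/
inductive MDer (B : MBase) : Multiset ℕ → ℕ → Prop where
  | ref (p : ℕ) : MDer B {p} p
  | app {r : MRule} (hr : r ∈ B) (S : Multiset ℕ × ℕ → Multiset ℕ)
      (h : ∀ pr ∈ r.prems, MDer B (S pr + pr.1) pr.2) :
      MDer B (r.prems.sum S) r.concl

/-- The resource-indexed support relation `⊩_B^P φ`. -/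
def MSupp : MForm → MBase → Multiset ℕ → Prop
  | .atom p, B, P => MDer B P p
  | .tensor φ ψ, B, P => ∀ X : MBase, B ⊆ X → ∀ U : Multiset ℕ, ∀ p : ℕ,
      (∀ Y : MBase, X ⊆ Y → ∀ V : Multiset ℕ,
        (∃ V₁ V₂ : Multiset ℕ, V = V₁ + V₂ ∧ MSupp φ Y V₁ ∧ MSupp ψ Y V₂) →
        MDer Y (U + V) p) →
      MDer X (P + U) p
  | .unit, B, P => ∀ X : MBase, B ⊆ X → ∀ U : Multiset ℕ, ∀ p : ℕ,
      MDer X U p → MDer X (P + U) p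
  | .limp φ ψ, B, P => ∀ X : MBase, B ⊆ X → ∀ U : Multiset ℕ,
      MSupp φ X U → MSupp ψ X (P + U)

/-- Support of a multiset of formulas: `⊩_B^P Γ`, obtained by splitting
the resources `P` among the members of `Γ`. -/
inductive MSuppCtx (B : MBase) : Multiset ℕ → Multiset MForm → Prop where
  | nil : MSuppCtx B 0 0
  | cons {P Q : Multiset ℕ} {φ : MForm} {Γ : Multiset MForm} :
      MSupp φ B P → MSuppCtx B Q Γ → MSuppCtx B (P + Q) (φ ::ₘ Γ)

/-- Support of a sequent: `Γ ⊩_B^P φ` (clause (Inf)). -/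
def MSuppInf (Γ : Multiset MForm) (B : MBase) (P : Multiset ℕ) (φ : MForm) : Prop :=
  ∀ X : MBase, B ⊆ X → ∀ U : Multiset ℕ, MSuppCtx X U Γ → MSupp φ X (P + U)

/-- Validity: `Γ ⊩ φ` iff `Γ ⊩_B^∅ φ` for every base `B`. -/
def MValid (Γ : Multiset MForm) (φ : MForm) : Prop :=
  ∀ B : MBase, MSuppInf Γ B 0 φ

/-- The natural deduction system NIMLL: `Γ ⊢ φ`. -/
inductive NIMLL : Multiset MForm → MForm → Prop where
  | ax (φ : MForm) : NIMLL {φ} φ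
  | limpI {Γ : Multiset MForm} {φ ψ : MForm} :
      NIMLL (φ ::ₘ Γ) ψ → NIMLL Γ (.limp φ ψ)
  | limpE {Γ Δ : Multiset MForm} {φ ψ : MForm} :
      NIMLL Γ (.limp φ ψ) → NIMLL Δ φ → NIMLL (Γ + Δ) ψ
  | unitI : NIMLL 0 .unit
  | unitE {Γ Δ : Multiset MForm} {φ : MForm} :
      NIMLL Γ φ → NIMLL Δ .unit → NIMLL (Γ + Δ) φ
  | tensorI {Γ Δ : Multiset MForm} {φ ψ : MForm} :
      NIMLL Γ φ → NIMLL Δ ψ → NIMLL (Γ + Δ) (.tensor φ ψ)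
  | tensorE {Γ Δ : Multiset MForm} {φ ψ χ : MForm} :
      NIMLL Γ (.tensor φ ψ) → NIMLL (φ ::ₘ ψ ::ₘ Δ) χ → NIMLL (Γ + Δ) χ

theorem mder_mono {B X : MBase} (hBX : B ⊆ X) {P : Multiset ℕ} {p : ℕ}
    (h : MDer B P p) : MDer X P p := by
  induction h with
  | ref p => exact MDer.ref p
  | app hr S _ ih => exact MDer.app (hBX hr) S ih

theorem msupp_mono {φ : MForm} {B X : MBase} (hBX : B ⊆ X) {P : Multiset ℕ}
    (h : MSupp φ B P) : MSupp φ X P := by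
  cases φ with
  | atom p => exact mder_mono hBX h
  | tensor φ ψ => exact fun Y hXY U p hc => h Y (hBX.trans hXY) U p hc
  | unit => exact fun Y hXY U p hd => h Y (hBX.trans hXY) U p hd
  | limp φ ψ => exact fun Y hXY U hφ => h Y (hBX.trans hXY) U hφ

theorem msuppctx_mono {B X : MBase} (h : B ⊆ X) {U : Multiset ℕ}
    {Γ : Multiset MForm} (hc : MSuppCtx B U Γ) : MSuppCtx X U Γ := by
  induction hc with
  | nil => exact .nil
  | cons hφ _ ih => exact .cons (msupp_mono h hφ) ih

/-- Second-order characterization: the "hard" direction, by induction on χ. -/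
theorem msupp_expand (χ : MForm) {B : MBase} {P : Multiset ℕ}
    (H : ∀ X : MBase, B ⊆ X → ∀ U : Multiset ℕ, ∀ p : ℕ,
      (∀ Y : MBase, X ⊆ Y → ∀ V : Multiset ℕ, MSupp χ Y V → MDer Y (U + V) p) →
      MDer X (P + U) p) : MSupp χ B P := by
  induction χ generalizing B P with
  | atom q =>
    have := H B (fun _ h => h) 0 q (fun Y _ V hV => by
      simpa [MSupp] using (hV : MDer Y V q))
    simpa [MSupp] using this
  | tensor φ ψ ihφ ihψ =>
    intro X hX U p hc
    refine H X hX U p (fun Y hY V hV => ?_)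
    have := hV Y (fun _ h => h) U p (fun Z hZ W hW => hc Z (hY.trans hZ) W hW)
    rwa [add_comm] at this
  | unit =>
    intro X hX U p hd
    refine H X hX U p (fun Y hY V hV => ?_)
    have := hV Y (fun _ h => h) U p (mder_mono hY hd)
    rwa [add_comm] at this
  | limp φ ψ ihφ ihψ =>
    intro X hX U hφ
    refine ihψ (fun Z hZ W q cont => ?_)
    have := H Z (hX.trans hZ) (U + W) q (fun Y hY V hV => by
      have hψ : MSupp ψ Y (V + U) :=
        hV Y (fun _ h => h) U (msupp_mono (hZ.trans hY) hφ)
      have := cont Y hY (V + U) hψ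
      have e : W + (V + U) = U + W + V := by abel
      rwa [e] at this)
    have e : P + (U + W) = P + U + W := by abel
    rwa [e] at this

theorem msuppctx_cons_inv' {X : MBase} {U : Multiset ℕ} {C : Multiset MForm}
    (h : MSuppCtx X U C) : ∀ a Γ, C = a ::ₘ Γ →
    ∃ P Q, U = P + Q ∧ MSupp a X P ∧ MSuppCtx X Q Γ := by
  induction h with
  | nil => intro a Γ hC; exact absurd hC.symm (Multiset.cons_ne_zero)
  | @cons P Q φ Γ' hφ hΓ ih =>
    intro a Γ hC
    rcases Multiset.cons_eq_cons.mp hC with ⟨rfl, rfl⟩ | ⟨_, cs, h1, h2⟩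
    · exact ⟨P, Q, rfl, hφ, hΓ⟩
    · obtain ⟨P', Q', rfl, ha, hcs⟩ := ih a cs h1
      exact ⟨P', P + Q', by abel, ha, h2 ▸ MSuppCtx.cons hφ hcs⟩

theorem msuppctx_split {X : MBase} : ∀ (Γ : Multiset MForm) {Δ : Multiset MForm}
    {U : Multiset ℕ}, MSuppCtx X U (Γ + Δ) →
    ∃ U₁ U₂, U = U₁ + U₂ ∧ MSuppCtx X U₁ Γ ∧ MSuppCtx X U₂ Δ := by
  intro Γ
  induction Γ using Multiset.induction with
  | empty => intro Δ U h; exact ⟨0, U, by simp, MSuppCtx.nil, by simpa using h⟩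
  | cons a Γ ih =>
    intro Δ U h
    rw [Multiset.cons_add] at h
    obtain ⟨P, Q, rfl, ha, hQ⟩ := msuppctx_cons_inv' h a (Γ + Δ) rfl
    obtain ⟨U₁, U₂, rfl, h1, h2⟩ := ih hQ
    exact ⟨P + U₁, U₂, (add_assoc ..).symm, MSuppCtx.cons ha h1, h2⟩

/-- (Validity of ⊗-elimination) If `Γ ⊩ φ ⊗ ψ` and `Δ ⨾ φ ⨾ ψ ⊩ χ`, then
`Γ ⨾ Δ ⊩ χ`. -/
theorem imll_tensor_elim_valid (Γ Δ : Multiset MForm) (φ ψ χ : MForm)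
    (h1 : MValid Γ (.tensor φ ψ)) (h2 : MValid (φ ::ₘ ψ ::ₘ Δ) χ) :
    MValid (Γ + Δ) χ := by
  intro B X hBX U hctx
  obtain ⟨U₁, U₂, rfl, hΓ, hΔ⟩ := msuppctx_split Γ hctx
  have ht := h1 B X hBX U₁ hΓ
  apply msupp_expand
  intro Z hZ W p cont
  have hmain := ht Z hZ (U₂ + W) p (fun Y hY V hV => by
    obtain ⟨V₁, V₂, rfl, hφ, hψ⟩ := hV
    have hctxY : MSuppCtx Y (V₁ + (V₂ + U₂)) (φ ::ₘ ψ ::ₘ Δ) :=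
      .cons hφ (.cons hψ (msuppctx_mono (hZ.trans hY) hΔ))
    have hχ := h2 B Y (hBX.trans (hZ.trans hY)) (V₁ + (V₂ + U₂)) hctxY
    have := cont Y hY _ hχ
    have e : W + (0 + (V₁ + (V₂ + U₂))) = U₂ + W + (V₁ + V₂) := by abel
    rwa [e] at this)
  have e : 0 + U₁ + (U₂ + W) = 0 + (U₁ + U₂) + W := by abel
  rwa [e] at hmain
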